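/- arXiv:2307.01781 — 2 statements merged into one kernel-verified Lean document; each statement's English description precedes it below -/
import Mathlib

section
/- Let k be a nonnegative integer, let x be a vertex, and let P be a simple path in G from x to t, all of whose vertices other than x satisfy d(v) > d(x), whose length ℓ satisfies ℓ ≤ d(t) − d(x) + k. Let m denote the number of stable edges of P (note m ≤ k follows from the length bound), and suppose d(x) + ⌊(k−m)/2⌋ + 1 ≤ d(t). Then P contains a vertex y such that: (1) d(x) + 1 ≤ d(y) ≤ d(x) + ⌊(k−m)/2⌋ + 1; (2) every vertex u ≠ y on the subpath P[y,t] satisfies d(u) > d(y); and (3) every vertex v on the subpath P[x,y] satisfies d(v) ≤ d(y). -/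
open SimpleGraph

section Helpers
variable {V : Type*} [DecidableEq V] {G : SimpleGraph V}

private lemma takeUntil_start' {x t : V} (p : G.Walk x t) (h : x ∈ p.support) :
    p.takeUntil x h = Walk.nil := by
  cases p <;> simp [Walk.takeUntil]

private lemma takeUntil_cons' {x w t u : V} (h : G.Adj x w) (Q : G.Walk w t) (hu : u ∈ Q.support)
    (hxu : x ≠ u) :
    (Walk.cons h Q).takeUntil u (by simp [hu]) = Walk.cons h (Q.takeUntil u hu) := by
  simp [Walk.takeUntil, hxu]

private lemma dropUntil_cons' {x w t u : V} (h : G.Adj x w) (Q : G.Walk w t) (hu : u ∈ Q.support)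
    (hxu : x ≠ u) :
    (Walk.cons h Q).dropUntil u (by simp [hu]) = Q.dropUntil u hu := by
  simp [Walk.dropUntil, hxu]

private lemma walk_length_count (d : V → ℕ) :
    ∀ {u v : V} (Q : G.Walk u v),
    (∀ e ∈ Q.darts, d e.snd + 1 ≥ d e.fst ∧ d e.fst + 1 ≥ d e.snd) →
    (Q.length : ℤ) = (d v : ℤ) - d u
      + 2 * ((Q.darts.filter (fun e => d e.fst = d e.snd + 1)).length : ℤ)
      + ((Q.darts.filter (fun e => d e.fst = d e.snd)).length : ℤ) := by
  intro u v Q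
  induction Q with
  | nil => simp
  | @cons a b c hadj Q ih =>
    intro hb
    have h1 : d b + 1 ≥ d a ∧ d a + 1 ≥ d b := hb ⟨(a, b), hadj⟩ (by simp)
    have ih' := ih (fun e he => hb e (by simp [he]))
    simp only [Walk.darts_cons, List.filter_cons, Walk.length_cons]
    rcases Nat.lt_trichotomy (d a) (d b) with hc | hc | hc
    · rw [if_neg (by simp; omega), if_neg (by simp; omega)]
      push_cast
      omega
    · rw [if_neg (by simp; omega), if_pos (by simp; omega)]
      simp only [List.length_cons]
      push_cast
      omega
    · rw [if_pos (by simp; omega), if_neg (by simp; omega)]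
      simp only [List.length_cons]
      push_cast
      omega

private lemma stay_above' (d : V → ℕ) (c : ℕ) :
    ∀ {w t : V} (Q : G.Walk w t),
    (∀ e ∈ Q.darts, d e.snd + 1 ≥ d e.fst ∧ d e.fst + 1 ≥ d e.snd) →
    (∀ e ∈ Q.darts, ¬(d e.fst = c + 1 ∧ d e.snd = c)) →
    c < d w → ∀ v ∈ Q.support, c < d v := by
  intro w t Q
  induction Q with
  | nil =>
    intro _ _ hw v hv
    simp only [Walk.support_nil, List.mem_singleton] at hv
    subst hv; exact hw
  | @cons a b c' hadj Q ih =>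
    intro hb hnc hw v hv
    have h1 : d b + 1 ≥ d a ∧ d a + 1 ≥ d b := hb ⟨(a, b), hadj⟩ (by simp)
    have hn1 : ¬(d a = c + 1 ∧ d b = c) := hnc ⟨(a, b), hadj⟩ (by simp)
    have hbgt : c < d b := by omega
    simp only [Walk.support_cons, List.mem_cons] at hv
    rcases hv with rfl | hv
    · exact hw
    · exact ih (fun e he => hb e (by simp [he])) (fun e he => hnc e (by simp [he])) hbgt v hv

private lemma split_at_level (d : V → ℕ) (c : ℕ) :
    ∀ {x t : V} (Q : G.Walk x t), Q.IsPath →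
    (∀ e ∈ Q.darts, d e.snd + 1 ≥ d e.fst ∧ d e.fst + 1 ≥ d e.snd) →
    (∀ e ∈ Q.darts, ¬(d e.fst = c + 1 ∧ d e.snd = c)) →
    d x ≤ c → c ≤ d t →
    ∃ (y : V) (hy : y ∈ Q.support), d y = c ∧
      (∀ u ∈ (Q.dropUntil y hy).support, u ≠ y → c < d u) ∧
      (∀ v ∈ (Q.takeUntil y hy).support, d v ≤ c) := by
  intro x t Q
  induction Q with
  | nil =>
    rename_i z
    intro _ _ _ hx ht
    have hc : d z = c := le_antisymm hx ht
    refine ⟨z, by simp, hc, ?_, ?_⟩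
    · intro u hu hne
      exact absurd (by simpa using Walk.support_dropUntil_subset _ _ hu) hne
    · intro v hv
      have := Walk.support_takeUntil_subset _ _ hv
      simp only [Walk.support_nil, List.mem_singleton] at this
      subst this; exact hx
  | @cons a b t' hadj Q ih =>
    intro hP hb hnc hx ht
    have h1 : d b + 1 ≥ d a ∧ d a + 1 ≥ d b := hb ⟨(a, b), hadj⟩ (by simp)
    by_cases hw : d b ≤ c
    · obtain ⟨y, hy, hyc, hdrop, htake⟩ := ih hP.of_cons
        (fun e he => hb e (by simp [he])) (fun e he => hnc e (by simp [he])) hw ht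
      have hay : a ≠ y := by
        rintro rfl
        exact ((Walk.cons_isPath_iff _ _).mp hP).2 hy
      refine ⟨y, by simp [hy], hyc, ?_, ?_⟩
      · rw [dropUntil_cons' hadj Q hy hay]
        exact hdrop
      · rw [takeUntil_cons' hadj Q hy hay]
        intro v hv
        simp only [Walk.support_cons, List.mem_cons] at hv
        rcases hv with rfl | hv
        · omega
        · exact htake v hv
    · have hac : d a = c := by omega
      refine ⟨a, by simp, hac, ?_, ?_⟩
      · intro u hu hne
        have hu' := Walk.support_dropUntil_subset _ _ hu
        simp only [Walk.support_cons, List.mem_cons] at hu'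
        rcases hu' with rfl | hu'
        · exact absurd rfl hne
        · exact stay_above' d c Q (fun e he => hb e (by simp [he]))
            (fun e he => hnc e (by simp [he])) (by omega) u hu'
      · intro v hv
        change v ∈ ((Walk.cons hadj Q).takeUntil a (Walk.start_mem_support _)).support at hv
        rw [takeUntil_start'] at hv
        simp only [Walk.support_nil, List.mem_singleton] at hv
        subst hv; omega

end Helpers

/-- splitting a path of bounded excess length at a vertex `y`
close to `x`, such that `P[y,t]` stays strictly farther from `s` than `y`,
and `P[x,y]` stays at distance at most `d(y)`. Here `d u = G.dist s u`,
and `m` is the number of stable edges of `P`. -/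
theorem detour_path_split {V : Type*} [DecidableEq V] (G : SimpleGraph V)
    (hconn : G.Connected) (s t : V) (k : ℕ) (x : V)
    (P : G.Walk x t) (hP : P.IsPath)
    (hup : ∀ v ∈ P.support, v ≠ x → G.dist s x < G.dist s v)
    (hlen : (P.length : ℤ) ≤ (G.dist s t : ℤ) - (G.dist s x : ℤ) + k)
    (m : ℕ)
    (hm : m = (P.darts.filter
      (fun e => G.dist s e.fst = G.dist s e.snd)).length)
    (hfar : G.dist s x + (k - m) / 2 + 1 ≤ G.dist s t) :
    ∃ (y : V) (hy : y ∈ P.support),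
      (G.dist s x + 1 ≤ G.dist s y ∧
        G.dist s y ≤ G.dist s x + (k - m) / 2 + 1) ∧
      (∀ u ∈ (P.dropUntil y hy).support, u ≠ y → G.dist s y < G.dist s u) ∧
      (∀ v ∈ (P.takeUntil y hy).support, G.dist s v ≤ G.dist s y) := by
  classical
  set q := (k - m) / 2 with hq
  -- distance changes by at most one along a dart
  have hbounds : ∀ e ∈ P.darts,
      G.dist s e.snd + 1 ≥ G.dist s e.fst ∧ G.dist s e.fst + 1 ≥ G.dist s e.snd := by
    intro e he
    have hadj : G.Adj e.fst e.snd := e.adj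
    have h1 : G.dist e.fst e.snd = 1 := (G.dist_eq_one_iff_adj).2 hadj
    have h2 : G.dist e.snd e.fst = 1 := (G.dist_eq_one_iff_adj).2 hadj.symm
    have t1 := hconn.dist_triangle (u := s) (v := e.fst) (w := e.snd)
    have t2 := hconn.dist_triangle (u := s) (v := e.snd) (w := e.fst)
    omega
  -- number of backward darts
  set B := (P.darts.filter
      (fun e => G.dist s e.fst = G.dist s e.snd + 1)).length with hB
  have hcount := walk_length_count (G.dist s) P hbounds
  rw [← hB, ← hm] at hcount
  have hBq : B ≤ q := by omega
  -- pigeonhole to find an uncrossed level c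
  set T : Finset ℕ := ((P.darts.filter
      (fun e => G.dist s e.fst = G.dist s e.snd + 1)).map
      (fun e => G.dist s e.snd)).toFinset with hT
  have hTcard : T.card ≤ B := by
    refine le_trans (List.toFinset_card_le _) ?_
    rw [List.length_map]
  have hIcc : (Finset.Icc (G.dist s x + 1) (G.dist s x + q + 1)).card = q + 1 := by
    rw [Nat.card_Icc]; omega
  obtain ⟨c, hcI, hcT⟩ :
      ∃ c ∈ Finset.Icc (G.dist s x + 1) (G.dist s x + q + 1), c ∉ T := by
    by_contra hcon
    push_neg at hcon
    have hsub : Finset.Icc (G.dist s x + 1) (G.dist s x + q + 1) ⊆ T := hcon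
    have := Finset.card_le_card hsub
    omega
  rw [Finset.mem_Icc] at hcI
  have hno : ∀ e ∈ P.darts, ¬(G.dist s e.fst = c + 1 ∧ G.dist s e.snd = c) := by
    rintro e he ⟨h1, h2⟩
    apply hcT
    rw [hT, List.mem_toFinset]
    exact List.mem_map.mpr ⟨e, List.mem_filter.mpr ⟨he, by simp; omega⟩, h2⟩
  obtain ⟨y, hy, hyc, hdrop, htake⟩ := split_at_level (G.dist s) c P hP hbounds hno
    (by omega) (by omega)
  refine ⟨y, hy, ⟨by omega, by omega⟩, ?_, ?_⟩
  · intro u hu hne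
    rw [hyc]
    exact hdrop u hu hne
  · intro v hv
    rw [hyc]
    exact htake v hv
end

section
/- Let k be a nonnegative integer, let x be a vertex, and let P be a simple path in G from x to t, all of whose vertices other than x satisfy d(v) > d(x), whose length ℓ satisfies ℓ ≤ d(t) − d(x) + k. Let m denote the number of stable edges of P, and suppose d(x) + ⌊(k−m)/2⌋ + 1 ≤ d(t). Then there exists a vertex y on P with d(x) < d(y) ≤ d(x) + ⌊(k−m)/2⌋ + 1 such that, writing A = P[x,y] and B = P[y,t] with lengths a and b respectively: every vertex of A lies in {x} ∪ {w : d(x) < d(w) ≤ d(y)}; every vertex of B lies in {y} ∪ {w : d(w) > d(y)}; a + b = ℓ; a ≤ d(y) − d(x) + k ≤ ⌊(3k−m)/2⌋ + 1; and b ≤ d(t) − d(y) + k. -/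
open SimpleGraph

private lemma dps_lip {V : Type*} {G : SimpleGraph V} (hconn : G.Connected) (s : V)
    {u v : V} (h : G.Adj u v) : G.dist s v ≤ G.dist s u + 1 := by
  have h1 : G.dist u v = 1 := SimpleGraph.dist_eq_one_iff_adj.2 h
  have := hconn.dist_triangle (u := s) (v := u) (w := v)
  omega

private lemma dps_key_ge {V : Type*} {G : SimpleGraph V} (hconn : G.Connected) (s : V) :
    ∀ {u v : V} (Q : G.Walk u v),
      (G.dist s v : ℤ) - (G.dist s u : ℤ)
        + ((Q.darts.filter (fun e => G.dist s e.fst = G.dist s e.snd)).length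
          + 2 * (Q.darts.filter (fun e => G.dist s e.snd < G.dist s e.fst)).length : ℕ)
        ≤ (Q.length : ℤ) := by
  intro u v Q
  induction Q with
  | nil => simp
  | @cons u w v h q ih =>
    have l1 : G.dist s w ≤ G.dist s u + 1 := dps_lip hconn s h
    have l2 : G.dist s u ≤ G.dist s w + 1 := dps_lip hconn s h.symm
    simp only [Walk.darts_cons, List.filter_cons, Walk.length_cons]
    rcases lt_trichotomy (G.dist s u) (G.dist s w) with hc | hc | hc
    · simp only [hc.ne, not_lt.2 hc.le, decide_eq_true_eq, if_neg, decide_eq_false_iff_not,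
        not_false_eq_true, if_false]
      push_cast at ih ⊢
      omega
    · simp only [hc, lt_irrefl, decide_eq_true_eq, if_pos, decide_eq_false_iff_not,
        not_false_eq_true, if_neg, List.length_cons]
      push_cast at ih ⊢
      omega
    · simp only [hc, hc.ne', decide_eq_true_eq, decide_eq_false_iff_not, not_false_eq_true,
        if_neg, if_pos, List.length_cons]
      push_cast at ih ⊢
      omega

private lemma dps_key_le {V : Type*} {G : SimpleGraph V} (hconn : G.Connected) (s : V) :
    ∀ {u v : V} (Q : G.Walk u v),
      (Q.length : ℤ) ≤
      (G.dist s v : ℤ) - (G.dist s u : ℤ)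
        + ((Q.darts.filter (fun e => G.dist s e.fst = G.dist s e.snd)).length
          + 2 * (Q.darts.filter (fun e => G.dist s e.snd < G.dist s e.fst)).length : ℕ) := by
  intro u v Q
  induction Q with
  | nil => simp
  | @cons u w v h q ih =>
    have l1 : G.dist s w ≤ G.dist s u + 1 := dps_lip hconn s h
    have l2 : G.dist s u ≤ G.dist s w + 1 := dps_lip hconn s h.symm
    simp only [Walk.darts_cons, List.filter_cons, Walk.length_cons]
    rcases lt_trichotomy (G.dist s u) (G.dist s w) with hc | hc | hc
    · simp only [hc.ne, not_lt.2 hc.le, decide_eq_true_eq, if_neg, decide_eq_false_iff_not,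
        not_false_eq_true, if_false]
      push_cast at ih ⊢
      omega
    · simp only [hc, lt_irrefl, decide_eq_true_eq, if_pos, decide_eq_false_iff_not,
        not_false_eq_true, if_neg, List.length_cons]
      push_cast at ih ⊢
      omega
    · simp only [hc, hc.ne', decide_eq_true_eq, decide_eq_false_iff_not, not_false_eq_true,
        if_neg, if_pos, List.length_cons]
      push_cast at ih ⊢
      omega


private lemma dps_dart_getVert {V : Type*} {G : SimpleGraph V} :
    ∀ {u v : V} (p : G.Walk u v) (i : ℕ), i < p.length →
      ∃ e ∈ p.darts, e.fst = p.getVert i ∧ e.snd = p.getVert (i + 1) := by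
  intro u v p
  induction p with
  | nil => intro i hi; simp at hi
  | @cons u w v h q ih =>
    intro i hi
    cases i with
    | zero =>
      refine ⟨⟨(u, w), h⟩, List.mem_cons_self, rfl, ?_⟩
      simp [Walk.getVert_cons_succ, Walk.getVert_zero]
    | succ i =>
      obtain ⟨e, he, h1, h2⟩ := ih i (by simpa [Walk.length_cons] using hi)
      exact ⟨e, List.mem_cons_of_mem _ he, by simpa [Walk.getVert_cons_succ] using h1,
        by simpa [Walk.getVert_cons_succ] using h2⟩

private lemma dps_getVert_inj {V : Type*} {G : SimpleGraph V} :
    ∀ {u v : V} (p : G.Walk u v), p.IsPath → ∀ {i j : ℕ}, i ≤ p.length → j ≤ p.length →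
      p.getVert i = p.getVert j → i = j := by
  intro u v p
  induction p with
  | nil => intro _ i j hi hj _; simp at hi hj; omega
  | @cons u w v h q ih =>
    intro hp i j hi hj hij
    have hq : q.IsPath := hp.of_cons
    have hu : u ∉ q.support := by
      have := hp
      rw [Walk.cons_isPath_iff] at this
      exact this.2
    cases i with
    | zero =>
      cases j with
      | zero => rfl
      | succ j =>
        exfalso
        rw [Walk.getVert_zero, Walk.getVert_cons_succ] at hij
        exact hu (Walk.mem_support_iff_exists_getVert.mpr
          ⟨j, hij.symm, by simpa [Walk.length_cons] using hj⟩)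
    | succ i =>
      cases j with
      | zero =>
        exfalso
        rw [Walk.getVert_zero, Walk.getVert_cons_succ] at hij
        exact hu (Walk.mem_support_iff_exists_getVert.mpr
          ⟨i, hij, by simpa [Walk.length_cons] using hi⟩)
      | succ j =>
        rw [Walk.getVert_cons_succ, Walk.getVert_cons_succ] at hij
        have := ih hq (by simpa [Walk.length_cons] using hi)
          (by simpa [Walk.length_cons] using hj) hij
        omega
/-- splitting a candidate detour path `P` from `x` to `t` at a
vertex `y` with `d(x) < d(y) ≤ d(x) + ⌊(k-m)/2⌋ + 1`, where
`A = P[x,y]`, `B = P[y,t]` satisfy the stated containment and length bounds.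
Here `d u = G.dist s u` and `m` is the number of stable edges of `P`. -/
theorem detour_path_split_full {V : Type*} [DecidableEq V] (G : SimpleGraph V)
    (hconn : G.Connected) (s t : V) (k : ℕ) (x : V)
    (P : G.Walk x t) (hP : P.IsPath)
    (hup : ∀ v ∈ P.support, v ≠ x → G.dist s x < G.dist s v)
    (hlen : (P.length : ℤ) ≤ (G.dist s t : ℤ) - (G.dist s x : ℤ) + k)
    (m : ℕ)
    (hm : m = (P.darts.filter
      (fun e => G.dist s e.fst = G.dist s e.snd)).length)
    (hfar : G.dist s x + (k - m) / 2 + 1 ≤ G.dist s t) :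
    ∃ (y : V) (hy : y ∈ P.support),
      (G.dist s x < G.dist s y ∧
        G.dist s y ≤ G.dist s x + (k - m) / 2 + 1) ∧
      (∀ w ∈ (P.takeUntil y hy).support,
        w = x ∨ (G.dist s x < G.dist s w ∧ G.dist s w ≤ G.dist s y)) ∧
      (∀ w ∈ (P.dropUntil y hy).support,
        w = y ∨ G.dist s y < G.dist s w) ∧
      (P.takeUntil y hy).length + (P.dropUntil y hy).length = P.length ∧
      (P.takeUntil y hy).length ≤ G.dist s y - G.dist s x + k ∧
      G.dist s y - G.dist s x + k ≤ (3 * k - m) / 2 + 1 ∧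
      (P.dropUntil y hy).length ≤ G.dist s t - G.dist s y + k := by
  classical
  have hf0 : G.dist s (P.getVert 0) = G.dist s x := by simp
  have hfn : G.dist s (P.getVert P.length) = G.dist s t := by simp [Walk.getVert_length]
  have hstep1 : ∀ i, i < P.length →
      G.dist s (P.getVert (i + 1)) ≤ G.dist s (P.getVert i) + 1 := fun i hi =>
    dps_lip hconn s (P.adj_getVert_succ hi)
  have hstep2 : ∀ i, i < P.length →
      G.dist s (P.getVert i) ≤ G.dist s (P.getVert (i + 1)) + 1 := fun i hi =>
    dps_lip hconn s (P.adj_getVert_succ hi).symm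
  have hmk : m + 2 * (P.darts.filter (fun e => G.dist s e.snd < G.dist s e.fst)).length ≤ k := by
    have h1 := dps_key_ge hconn s P
    rw [← hm] at h1
    push_cast at h1
    omega
  -- existence of a clean cut value
  have hcut : ∃ c j, (G.dist s x < c ∧ c ≤ G.dist s x + (k - m) / 2 + 1) ∧ j ≤ P.length ∧
      G.dist s (P.getVert j) = c ∧
      (∀ i, i ≤ j → G.dist s (P.getVert i) ≤ c) ∧
      (∀ i, j < i → i ≤ P.length → c < G.dist s (P.getVert i)) := by
    by_cases hex : ∃ c j, (G.dist s x < c ∧ c ≤ G.dist s x + (k - m) / 2 + 1) ∧ j ≤ P.length ∧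
        G.dist s (P.getVert j) = c ∧
        (∀ i, i ≤ j → G.dist s (P.getVert i) ≤ c) ∧
        (∀ i, j < i → i ≤ P.length → c < G.dist s (P.getVert i))
    · exact hex
    exfalso
    have hdown : ∀ c ∈ Finset.Icc (G.dist s x + 1) (G.dist s x + (k - m) / 2 + 1),
        c ∈ ((P.darts.filter (fun e => G.dist s e.snd < G.dist s e.fst)).toFinset.image
          (fun e => G.dist s e.snd)) := by
      intro c hc
      rw [Finset.mem_Icc] at hc
      obtain ⟨js, hjsm, hjstop⟩ : ∃ js ∈ (Finset.range (P.length + 1)).filter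
          (fun j => G.dist s (P.getVert j) ≤ c),
          ∀ i ∈ (Finset.range (P.length + 1)).filter
            (fun j => G.dist s (P.getVert j) ≤ c), i ≤ js := by
        have hne : ((Finset.range (P.length + 1)).filter
            (fun j => G.dist s (P.getVert j) ≤ c)).Nonempty :=
          ⟨0, by simp only [Finset.mem_filter, Finset.mem_range]; constructor <;> omega⟩
        exact ⟨_, Finset.max'_mem _ hne, fun i hi => Finset.le_max' _ i hi⟩
      rw [Finset.mem_filter, Finset.mem_range] at hjsm
      obtain ⟨hjsn, hjsc⟩ := hjsm
      have hjsmax : ∀ i, i ≤ P.length → G.dist s (P.getVert i) ≤ c → i ≤ js := fun i h1 h2 =>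
        hjstop i (by rw [Finset.mem_filter, Finset.mem_range]; exact ⟨by omega, h2⟩)
      have hpost : ∀ i, js < i → i ≤ P.length → c < G.dist s (P.getVert i) := by
        intro i h1 h2
        by_contra h3
        have := hjsmax i h2 (by omega)
        omega
      have hfjs : G.dist s (P.getVert js) = c := by
        rcases Nat.lt_or_ge js P.length with hlt | hge
        · have h3 := hpost (js + 1) (by omega) (by omega)
          have h4 := hstep1 js (by omega)
          omega
        · have hjn : js = P.length := by omega
          rw [hjn] at hjsc ⊢
          omega
      have hnotall : ¬ ∀ i, i ≤ js → G.dist s (P.getVert i) ≤ c := by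
        intro hall
        exact hex ⟨c, js, ⟨by omega, by omega⟩, by omega, hfjs, hall, hpost⟩
      push_neg at hnotall
      obtain ⟨i0, hi0le, hi0⟩ := hnotall
      obtain ⟨j1, hj1m, hj1top⟩ : ∃ j1 ∈ (Finset.range js).filter
          (fun i => c < G.dist s (P.getVert i)),
          ∀ i ∈ (Finset.range js).filter (fun i => c < G.dist s (P.getVert i)), i ≤ j1 := by
        have hne : ((Finset.range js).filter
            (fun i => c < G.dist s (P.getVert i))).Nonempty := by
          refine ⟨i0, ?_⟩
          rw [Finset.mem_filter, Finset.mem_range]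
          have : i0 ≠ js := by intro h; rw [h] at hi0; omega
          exact ⟨by omega, hi0⟩
        exact ⟨_, Finset.max'_mem _ hne, fun i hi => Finset.le_max' _ i hi⟩
      rw [Finset.mem_filter, Finset.mem_range] at hj1m
      obtain ⟨hj1js, hj1c⟩ := hj1m
      have hj1max : ∀ i, i < js → c < G.dist s (P.getVert i) → i ≤ j1 := fun i h1 h2 =>
        hj1top i (by rw [Finset.mem_filter, Finset.mem_range]; exact ⟨h1, h2⟩)
      have hup1 : G.dist s (P.getVert (j1 + 1)) ≤ c := by
        rcases Nat.lt_or_ge (j1 + 1) js with hlt | hge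
        · by_contra h3
          have := hj1max (j1 + 1) hlt (by omega)
          omega
        · have : j1 + 1 = js := by omega
          rw [this]
          omega
      have hlow : c ≤ G.dist s (P.getVert (j1 + 1)) := by
        have := hstep2 j1 (by omega)
        omega
      obtain ⟨e, he, hef, hes⟩ := dps_dart_getVert P j1 (by omega)
      have hefd : G.dist s e.fst = G.dist s (P.getVert j1) := by rw [hef]
      have hesd : G.dist s e.snd = G.dist s (P.getVert (j1 + 1)) := by rw [hes]
      rw [Finset.mem_image]
      refine ⟨e, ?_, by omega⟩
      rw [List.mem_toFinset, List.mem_filter]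
      exact ⟨he, by simp only [decide_eq_true_eq]; omega⟩
    have h1 := Finset.card_le_card hdown
    rw [Nat.card_Icc] at h1
    have h2 := Finset.card_image_le (s := (P.darts.filter
      (fun e => G.dist s e.snd < G.dist s e.fst)).toFinset)
      (f := fun e : G.Dart => G.dist s e.snd)
    have h3 := List.toFinset_card_le (P.darts.filter
      (fun e => G.dist s e.snd < G.dist s e.fst))
    omega
  obtain ⟨c, j, ⟨hc1, hc2⟩, hjn, hfj, hpre, hpost⟩ := hcut
  have hy : P.getVert j ∈ P.support := Walk.mem_support_iff_exists_getVert.mpr ⟨j, rfl, by omega⟩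
  set y := P.getVert j with hy'
  have hdy : G.dist s y = c := hfj
  have hspec : (P.takeUntil y hy).append (P.dropUntil y hy) = P := P.take_spec hy
  have hab : (P.takeUntil y hy).length + (P.dropUntil y hy).length = P.length := by
    rw [← Walk.length_append, hspec]
  have happ : ∀ i, P.getVert i
      = ((P.takeUntil y hy).append (P.dropUntil y hy)).getVert i := by
    intro i
    rw [hspec]
  have hgetB : ∀ i, (P.dropUntil y hy).getVert i
      = P.getVert ((P.takeUntil y hy).length + i) := by
    intro i
    rw [happ, Walk.getVert_append]
    simp
  have hgetA : ∀ i, i < (P.takeUntil y hy).length →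
      (P.takeUntil y hy).getVert i = P.getVert i := by
    intro i hi
    rw [happ, Walk.getVert_append, if_pos hi]
  have hPa : P.getVert (P.takeUntil y hy).length = y := by
    have := hgetB 0
    simpa using this.symm
  have haj : (P.takeUntil y hy).length = j := by
    exact dps_getVert_inj P hP (by omega) (by omega) (by rw [hPa])
  -- dart counting split
  have hsplit : P.darts = (P.takeUntil y hy).darts ++ (P.dropUntil y hy).darts := by
    have h1 := congrArg Walk.darts hspec
    rw [Walk.darts_append] at h1
    exact h1.symm
  have hZsplit : m
      = ((P.takeUntil y hy).darts.filter (fun e => G.dist s e.fst = G.dist s e.snd)).length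
      + ((P.dropUntil y hy).darts.filter (fun e => G.dist s e.fst = G.dist s e.snd)).length := by
    rw [hm, hsplit, List.filter_append, List.length_append]
  have hDsplit : (P.darts.filter (fun e => G.dist s e.snd < G.dist s e.fst)).length
      = ((P.takeUntil y hy).darts.filter (fun e => G.dist s e.snd < G.dist s e.fst)).length
      + ((P.dropUntil y hy).darts.filter (fun e => G.dist s e.snd < G.dist s e.fst)).length := by
    rw [hsplit, List.filter_append, List.length_append]
  have hkeyA := dps_key_le hconn s (P.takeUntil y hy)
  have hkeyB := dps_key_le hconn s (P.dropUntil y hy)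
  have hxy : G.dist s x < G.dist s y := by omega
  have hyt : G.dist s y ≤ G.dist s t := by omega
  refine ⟨y, hy, ⟨by omega, by omega⟩, ?_, ?_, hab, ?_, by omega, ?_⟩
  · -- A containment
    intro w hw
    by_cases hwx : w = x
    · exact Or.inl hwx
    refine Or.inr ⟨hup w (Walk.support_takeUntil_subset P hy hw) hwx, ?_⟩
    obtain ⟨i, hiw, hile⟩ := Walk.mem_support_iff_exists_getVert.mp hw
    rcases Nat.lt_or_ge i (P.takeUntil y hy).length with hlt | hge
    · have h1 : w = P.getVert i := by rw [← hiw, hgetA i hlt]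
      have h2 : G.dist s (P.getVert i) ≤ c := hpre i (by omega)
      rw [h1]
      omega
    · have : i = (P.takeUntil y hy).length := by omega
      rw [this, Walk.getVert_length] at hiw
      rw [← hiw]
  · -- B containment
    intro w hw
    obtain ⟨i, hiw, hile⟩ := Walk.mem_support_iff_exists_getVert.mp hw
    cases i with
    | zero =>
      left
      rw [← hiw, Walk.getVert_zero]
    | succ i =>
      right
      have h1 : w = P.getVert ((P.takeUntil y hy).length + (i + 1)) := by rw [← hiw, hgetB]
      have h2 : c < G.dist s (P.getVert ((P.takeUntil y hy).length + (i + 1))) :=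
        hpost _ (by omega) (by omega)
      rw [h1]
      omega
  · -- length A bound
    push_cast at hkeyA
    omega
  · -- length B bound
    push_cast at hkeyB
    omega
end
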